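/- Let K be an algebraically closed field of characteristic 0, let d ≥ 2, and let W_d be the K-vector space of binary forms of degree d in x, y. Let V ⊆ W_d be a K-linear subspace such that ℓ^d ∉ V for every linear form ℓ (i.e. the projectivization of V is disjoint from the rational normal curve). Then there exist d pairwise non-proportional linear forms ℓ₁, …, ℓ_d such that V ⊆ span_K{ℓ₁^d, …, ℓ_d^d}. -/

import Mathlib

open MvPolynomial Submodule

noncomputable section

/-- A linear form: a nonzero binary (i.e. two-variable) form of degree `1`. -/
def IsLinForm {K : Type*} [CommSemiring K] (l : MvPolynomial (Fin 2) K) : Prop :=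
  l ≠ 0 ∧ l.IsHomogeneous 1

namespace Polynomial

noncomputable section

variable {K : Type*} [Field K]

/-- The apolarity-type functional: `BL d q f = ∑ i, q.coeff (d-i) * f.coeff i / choose d i`. -/
def BL (d : ℕ) (q : K[X]) : K[X] →ₗ[K] K :=
  ∑ i ∈ Finset.range (d+1), (q.coeff (d - i) / (d.choose i : K)) • Polynomial.lcoeff K i

lemma BL_apply (d : ℕ) (q f : K[X]) :
    BL d q f = ∑ i ∈ Finset.range (d+1), q.coeff (d - i) / (d.choose i : K) * f.coeff i := by
  simp [BL, LinearMap.sum_apply, lcoeff_apply]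

lemma BL_add (d : ℕ) (q q' : K[X]) : BL (K := K) d (q + q') = BL d q + BL d q' := by
  ext f
  simp [BL_apply, coeff_add, add_div, add_mul, Finset.sum_add_distrib]

lemma BL_smul (d : ℕ) (c : K) (q : K[X]) : BL d (c • q) = c • BL d q := by
  refine LinearMap.ext fun f => ?_
  rw [LinearMap.smul_apply, BL_apply, BL_apply, smul_eq_mul, Finset.mul_sum]
  refine Finset.sum_congr rfl fun i _ => ?_
  rw [coeff_smul, smul_eq_mul]
  ring

lemma BL_zero (d : ℕ) : BL (K := K) d 0 = 0 := by
  ext f; simp [BL_apply]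

end
noncomputable section
open Polynomial
variable {K : Type*} [Field K] [CharZero K]

lemma choose_cast_ne (d i : ℕ) (h : i ≤ d) : ((d.choose i : K)) ≠ 0 :=
  Nat.cast_ne_zero.mpr (Nat.choose_pos h).ne'

lemma BL_pow (d : ℕ) (q : K[X]) (hq : q.natDegree < d + 1) (r : K) :
    BL d q ((X - C r)^d) = q.eval (-r) := by
  rw [BL_apply]
  have : ∀ i ∈ Finset.range (d+1),
      q.coeff (d - i) / (d.choose i : K) * ((X - C r)^d).coeff i
        = q.coeff (d - i) * (-r)^(d - i) := by
    intro i hi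
    rw [Finset.mem_range, Nat.lt_succ_iff] at hi
    rw [sub_eq_add_neg, ← C_neg, coeff_X_add_C_pow]
    field_simp [choose_cast_ne d i hi]
  rw [Finset.sum_congr rfl this]
  have := Finset.sum_range_reflect (fun j => q.coeff j * (-r)^j) (d+1)
  simp only [Nat.add_sub_cancel] at this
  rw [this, eval_eq_sum_range' hq]

lemma BL_one (d : ℕ) (q : K[X]) : BL d q 1 = q.coeff d := by
  rw [BL_apply]
  rw [Finset.sum_eq_single 0]
  · simp
  · intro i _ hi; simp [coeff_one, hi]
  · simp

end
noncomputable section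
open Polynomial Submodule
variable {K : Type*} [Field K] [CharZero K]

/-- The annihilator of `U` under the pairing `BL d`. -/
def AnnU (d : ℕ) (U : Submodule K K[X]) : Submodule K K[X] where
  carrier := {q | ∀ u ∈ U, BL d q u = 0}
  add_mem' := by
    intro a b ha hb u hu
    rw [BL_add]
    simp [ha u hu, hb u hu]
  zero_mem' := by intro u _; rw [BL_zero]; rfl
  smul_mem' := by
    intro c q hq u hu
    rw [BL_smul]
    simp [hq u hu]

lemma mem_AnnU {d : ℕ} {U : Submodule K K[X]} {q : K[X]} :
    q ∈ AnnU d U ↔ ∀ u ∈ U, BL d q u = 0 := Iff.rfl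

/-- Duality: any `f` of degree `< d+1` not in `U` is separated from `U` by some
`q` of degree `< d+1` via the pairing. -/
lemma exists_ann (d : ℕ) (U : Submodule K K[X]) (hU : U ≤ degreeLT K (d+1))
    {f : K[X]} (hfd : f ∈ degreeLT K (d+1)) (hf : f ∉ U) :
    ∃ q ∈ degreeLT K (d+1) ⊓ AnnU d U, BL d q f ≠ 0 := by
  obtain ⟨φ, hφf, hφU⟩ := Submodule.exists_dual_map_eq_bot_of_notMem hf inferInstance
  set q : K[X] := ∑ i ∈ Finset.range (d+1), C (φ (X^i) * (d.choose i : K)) * X^(d-i) with hq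
  have hcoeff : ∀ i ∈ Finset.range (d+1), q.coeff (d - i) = φ (X^i) * (d.choose i : K) := by
    intro i hi
    rw [Finset.mem_range, Nat.lt_succ_iff] at hi
    rw [hq, finset_sum_coeff]
    rw [Finset.sum_eq_single i]
    · rw [coeff_C_mul, coeff_X_pow, if_pos rfl, mul_one]
    · intro j hj hji
      rw [Finset.mem_range, Nat.lt_succ_iff] at hj
      have hne : d - j ≠ d - i := fun h => hji (by omega)
      rw [coeff_C_mul, coeff_X_pow, if_neg hne.symm, mul_zero]
    · intro h; exact absurd (Finset.mem_range.mpr (Nat.lt_succ_of_le hi)) h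
  have hqBL : ∀ g ∈ degreeLT K (d+1), BL d q g = φ g := by
    intro g hg
    have hgd : g.natDegree < d + 1 := by
      rcases eq_or_ne g 0 with rfl | hg0
      · simp
      · exact natDegree_lt_iff_degree_lt hg0 |>.mpr (by exact_mod_cast (mem_degreeLT.mp hg))
    rw [BL_apply]
    have h1 : ∀ i ∈ Finset.range (d+1),
        q.coeff (d - i) / (d.choose i : K) * g.coeff i = g.coeff i * φ (X^i) := by
      intro i hi
      rw [hcoeff i hi]
      have : i ≤ d := Nat.lt_succ_iff.mp (Finset.mem_range.mp hi)
      field_simp [choose_cast_ne d i this]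
    rw [Finset.sum_congr rfl h1]
    conv_rhs => rw [g.as_sum_range' (d+1) hgd]
    rw [map_sum]
    refine Finset.sum_congr rfl fun i _ => ?_
    rw [← smul_eq_mul, ← map_smul]
    congr 1
    rw [Polynomial.smul_X_eq_monomial]
  have hqd : q ∈ degreeLT K (d+1) := by
    rw [mem_degreeLT, hq]
    refine lt_of_le_of_lt (Polynomial.degree_sum_le _ _) ?_
    rw [Finset.sup_lt_iff (by exact_mod_cast WithBot.bot_lt_coe (d+1))]
    intro i hi
    rw [Finset.mem_range, Nat.lt_succ_iff] at hi
    refine lt_of_le_of_lt (degree_C_mul_X_pow_le _ _) ?_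
    exact_mod_cast Nat.lt_succ_of_le (Nat.sub_le d i)
  refine ⟨q, ⟨hqd, fun u hu => ?_⟩, ?_⟩
  · rw [hqBL u (hU hu)]
    have : φ u ∈ Submodule.map φ U := ⟨u, hu, rfl⟩
    rwa [hφU, Submodule.mem_bot] at this
  · rw [hqBL f hfd]; exact hφf

end
noncomputable section
open Polynomial Submodule
variable {K : Type*} [Field K] [CharZero K]

lemma lin_indep_powers (d : ℕ) (r : Fin d → K) (hr : Function.Injective r) :
    LinearIndependent K (fun i : Fin d => (X - C (r i))^d : Fin d → K[X]) := by
  rw [Fintype.linearIndependent_iff]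
  intro c hc j
  set q : K[X] := ∏ i ∈ Finset.univ.erase j, (X - C (-(r i))) with hqdef
  have hqd : q.natDegree < d + 1 := by
    rw [hqdef, natDegree_prod _ _ (fun i _ => X_sub_C_ne_zero _)]
    simp only [natDegree_X_sub_C, Finset.sum_const, smul_eq_mul, mul_one]
    have := Finset.card_erase_of_mem (Finset.mem_univ j)
    rw [this, Finset.card_univ, Fintype.card_fin]
    omega
  have heval : ∀ i : Fin d, q.eval (-(r i)) = ∏ i' ∈ Finset.univ.erase j, (r i' - r i) := by
    intro i
    rw [hqdef, eval_prod]
    refine Finset.prod_congr rfl fun i' _ => ?_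
    simp [eval_sub, eval_X, eval_C]
    ring
  have h0 := congrArg (BL d q) hc
  rw [map_zero, map_sum] at h0
  simp only [map_smul, smul_eq_mul] at h0
  have hterm : ∀ i : Fin d, BL d q ((X - C (r i))^d) = q.eval (-(r i)) :=
    fun i => BL_pow d q hqd (r i)
  rw [Finset.sum_congr rfl (fun i _ => by rw [hterm i])] at h0
  rw [Finset.sum_eq_single j] at h0
  · have hne : q.eval (-(r j)) ≠ 0 := by
      rw [heval j]
      refine Finset.prod_ne_zero_iff.mpr fun i' hi' => sub_ne_zero.mpr fun h => ?_
      exact (Finset.mem_erase.mp hi').1 (hr h)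
    exact (mul_eq_zero.mp h0).resolve_right hne
  · intro i _ hij
    rw [heval i, Finset.prod_eq_zero (Finset.mem_erase.mpr ⟨hij, Finset.mem_univ i⟩)
      (by ring), mul_zero]
  · intro h; exact absurd (Finset.mem_univ j) h

lemma coprime_of_no_common_root {p q : K[X]} [IsAlgClosed K] (hp : p ≠ 0)
    (h : ∀ s : K, p.eval s = 0 → q.eval s ≠ 0) : IsCoprime p q := by
  classical
  rw [← EuclideanDomain.gcd_isUnit_iff]
  by_contra hgu
  have hg0 : EuclideanDomain.gcd p q ≠ 0 := fun h0 => hp (EuclideanDomain.gcd_eq_zero_iff.mp h0).1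
  have hdeg : (EuclideanDomain.gcd p q).degree ≠ 0 := by
    intro hdeg
    exact hgu (isUnit_iff_degree_eq_zero.mpr hdeg)
  obtain ⟨s, hs⟩ := IsAlgClosed.exists_root _ hdeg
  have hps : p.eval s = 0 :=
    eval_eq_zero_of_dvd_of_eval_eq_zero (EuclideanDomain.gcd_dvd_left p q) hs
  have hqs : q.eval s = 0 :=
    eval_eq_zero_of_dvd_of_eval_eq_zero (EuclideanDomain.gcd_dvd_right p q) hs
  exact h s hps hqs

end
noncomputable section
open Polynomial Submodule
variable {K : Type*} [Field K] [CharZero K]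

lemma exists_eval_ne_on_finset (A : Submodule K K[X])
    (hA : ∀ s : K, ∃ q ∈ A, q.eval s ≠ 0) (S : Finset K) :
    ∃ q ∈ A, ∀ s ∈ S, q.eval s ≠ 0 := by
  classical
  induction S using Finset.induction_on with
  | empty => exact ⟨0, A.zero_mem, by simp⟩
  | @insert a S ha IH =>
    obtain ⟨p, hpA, hp⟩ := IH
    obtain ⟨q, hqA, hq⟩ := hA a
    obtain ⟨t, ht⟩ := Infinite.exists_notMem_finset
      (insert (0:K) ((insert a S).image fun s => -(p.eval s) / (q.eval s)))
    refine ⟨p + t • q, A.add_mem hpA (A.smul_mem t hqA), fun s hs => ?_⟩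
    simp only [eval_add, eval_smul, smul_eq_mul]
    rcases eq_or_ne (q.eval s) 0 with hq0 | hq0
    · rw [hq0, mul_zero, add_zero]
      rcases Finset.mem_insert.mp hs with rfl | hsS
      · exact absurd hq0 hq
      · exact hp s hsS
    · intro habs
      have : t = -(p.eval s) / (q.eval s) := by
        rw [eq_div_iff hq0]; linear_combination habs
      exact ht (Finset.mem_insert.mpr (Or.inr
        (Finset.mem_image.mpr ⟨s, hs, this.symm⟩)))

end
noncomputable section
open Polynomial Submodule
variable {K : Type*} [Field K] [CharZero K] [IsAlgClosed K]

lemma pow_mem_degreeLT (d : ℕ) (a : K) : (X - C a)^d ∈ degreeLT K (d+1) := by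
  rw [mem_degreeLT, degree_pow, degree_X_sub_C, nsmul_eq_mul, mul_one]
  exact_mod_cast Nat.lt_succ_self d

theorem poly_core (d : ℕ) (hd : 1 ≤ d) (U : Submodule K K[X])
    (hU : U ≤ degreeLT K (d+1)) (h1 : (1:K[X]) ∉ U)
    (hroot : ∀ r : K, (X - C r)^d ∉ U) :
    ∃ s : Fin d → K, Function.Injective s ∧
      U ≤ span K (Set.range fun i => (X - C (s i))^d) := by
  classical
  set A : Submodule K K[X] := degreeLT K (d+1) ⊓ AnnU d U with hA
  -- first element : degree exactly d
  obtain ⟨p₁, hp₁A, hp₁⟩ := exists_ann d U hU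
    (f := 1) (by rw [mem_degreeLT, degree_one]; exact_mod_cast Nat.succ_pos d) h1
  rw [BL_one] at hp₁
  have hp₁ne : p₁ ≠ 0 := fun h => hp₁ (by simp [h])
  -- separating elements for every point
  have hAs : ∀ s : K, ∃ q ∈ A, q.eval s ≠ 0 := by
    intro s
    obtain ⟨q, hqA, hq⟩ := exists_ann d U hU (f := (X - C (-s))^d)
      (pow_mem_degreeLT d (-s)) (hroot (-s))
    refine ⟨q, hqA, ?_⟩
    rwa [BL_pow d q (by
      have := (mem_degreeLT.mp hqA.1)
      rcases eq_or_ne q 0 with rfl | hq0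
      · simpa using Nat.succ_pos d
      · exact (natDegree_lt_iff_degree_lt hq0).mpr (by exact_mod_cast this)) (-s), neg_neg] at hq
  -- second element, nonvanishing at roots of p₁
  obtain ⟨p₂, hp₂A, hp₂⟩ := exists_eval_ne_on_finset A hAs p₁.roots.toFinset
  have hno : ∀ s : K, p₁.eval s = 0 → p₂.eval s ≠ 0 := fun s hs =>
    hp₂ s (Multiset.mem_toFinset.mpr ((mem_roots hp₁ne).mpr hs))
  have hcop : IsCoprime p₁ p₂ := coprime_of_no_common_root hp₁ne hno
  -- the Wronskian
  set Wr : K[X] := derivative p₁ * p₂ - p₁ * derivative p₂ with hWr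
  have hW0 : Wr ≠ 0 := by
    intro h0
    have heq : derivative p₁ * p₂ = p₁ * derivative p₂ := by
      have := sub_eq_zero.mp (hWr ▸ h0)
      linear_combination this
    have hdvd : p₁ ∣ derivative p₁ := hcop.dvd_of_dvd_mul_right ⟨derivative p₂, heq⟩
    have hd1 : p₁.natDegree ≠ 0 := by
      intro hnd
      have : d ≤ p₁.natDegree := le_natDegree_of_ne_zero hp₁
      omega
    rcases eq_or_ne (derivative p₁) 0 with hder | hder
    · exact hd1 (natDegree_eq_zero_of_derivative_eq_zero hder)
    · have h1' := Polynomial.natDegree_le_of_dvd hdvd hder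
      have h2' := Polynomial.natDegree_derivative_lt hd1
      omega
  -- choose good parameter t
  obtain ⟨t, ht⟩ := Infinite.exists_notMem_finset
    (insert (-(p₁.coeff d) / (p₂.coeff d))
      (Wr.roots.toFinset.image fun s => -(p₁.eval s) / (p₂.eval s)))
  set p : K[X] := p₁ + t • p₂ with hp
  have hpA : p ∈ A := A.add_mem hp₁A (A.smul_mem t hp₂A)
  have hpd : p.coeff d ≠ 0 := by
    rw [hp, coeff_add, coeff_smul, smul_eq_mul]
    rcases eq_or_ne (p₂.coeff d) 0 with h2 | h2
    · rw [h2, mul_zero, add_zero]; exact hp₁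
    · intro habs
      refine ht (Finset.mem_insert.mpr (Or.inl ?_))
      rw [eq_div_iff h2]
      linear_combination habs
  have hpne : p ≠ 0 := fun h => hpd (by simp [h])
  have hpdeg : p.natDegree = d := by
    refine le_antisymm ?_ (le_natDegree_of_ne_zero hpd)
    have := mem_degreeLT.mp hpA.1
    have := (natDegree_lt_iff_degree_lt hpne).mpr (by exact_mod_cast this)
    omega
  -- p is separable
  have hsep : p.Separable := by
    refine coprime_of_no_common_root hpne fun s hs hs' => ?_
    have e1 : p₁.eval s + t * p₂.eval s = 0 := by
      rw [hp] at hs; simpa using hs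
    have e2 : (derivative p₁).eval s + t * (derivative p₂).eval s = 0 := by
      rw [hp, derivative_add, derivative_smul] at hs'; simpa using hs'
    rcases eq_or_ne (p₂.eval s) 0 with h2 | h2
    · have : p₁.eval s = 0 := by rw [h2, mul_zero, add_zero] at e1; exact e1
      exact hno s this h2
    · have hWs : Wr.eval s = 0 := by
        rw [hWr]
        simp only [eval_sub, eval_mul]
        linear_combination (p₂.eval s) * e2 - ((derivative p₂).eval s) * e1
      refine ht (Finset.mem_insert.mpr (Or.inr (Finset.mem_image.mpr
        ⟨s, Multiset.mem_toFinset.mpr ((mem_roots hW0).mpr hWs), ?_⟩)))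
      rw [eq_comm, eq_div_iff h2]
      linear_combination e1
  have hsq : Squarefree p := hsep.squarefree
  -- the d distinct roots
  have hcard : p.roots.toFinset.card = d := by
    rw [Multiset.toFinset_card_of_nodup (nodup_roots hsep),
      splits_iff_card_roots.mp (IsAlgClosed.splits p), hpdeg]
  set e := p.roots.toFinset.equivFinOfCardEq hcard with he
  set s : Fin d → K := fun i => -((e.symm i : K)) with hs
  have hsinj : Function.Injective s := by
    intro i j hij
    have : (e.symm i : K) = (e.symm j : K) := by
      have := neg_injective hij
      exact this
    exact e.symm.injective (Subtype.ext this)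
  have hroots : ∀ i, p.eval (-(s i)) = 0 := by
    intro i
    rw [hs]
    simp only [neg_neg]
    have hmem : ((e.symm i : K)) ∈ p.roots.toFinset := (e.symm i).2
    exact (mem_roots hpne).mp (Multiset.mem_toFinset.mp hmem)
  refine ⟨s, hsinj, ?_⟩
  -- dimension count
  set S : Submodule K K[X] := span K (Set.range fun i => (X - C (s i))^d) with hS
  set N : Submodule K K[X] := degreeLT K (d+1) ⊓ LinearMap.ker (BL d p) with hN
  haveI : FiniteDimensional K (degreeLT K (d+1) : Submodule K K[X]) :=
    LinearEquiv.finiteDimensional (degreeLTEquiv K (d+1)).symm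
  have hdegnat : p.natDegree < d + 1 := by omega
  have hSN : S ≤ N := by
    rw [hS, span_le]
    rintro _ ⟨i, rfl⟩
    refine ⟨pow_mem_degreeLT d (s i), ?_⟩
    rw [SetLike.mem_coe, LinearMap.mem_ker, BL_pow d p hdegnat (s i), hroots i]
  have hUN : U ≤ N := fun u hu => ⟨hU hu, LinearMap.mem_ker.mpr (hpA.2 u hu)⟩
  have hNlt : N < degreeLT K (d+1) := by
    refine lt_of_le_of_ne inf_le_left fun habs => ?_
    have h1N : (1 : K[X]) ∈ N := by
      rw [habs, mem_degreeLT, degree_one]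
      exact_mod_cast Nat.succ_pos d
    have := LinearMap.mem_ker.mp h1N.2
    rw [BL_one] at this
    exact hpd this
  have hfinN : Module.finrank K N ≤ d := by
    have := Submodule.finrank_lt_finrank_of_lt hNlt
    have hdeq : Module.finrank K (degreeLT K (d+1) : Submodule K K[X]) = d + 1 := by
      rw [LinearEquiv.finrank_eq (degreeLTEquiv K (d+1)), Module.finrank_fin_fun]
    omega
  have hfinS : Module.finrank K S = d := by
    rw [hS, finrank_span_eq_card (lin_indep_powers d s hsinj), Fintype.card_fin]
  haveI : FiniteDimensional K N := Submodule.finiteDimensional_of_le hNlt.le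
  have hSeqN : S = N := Submodule.eq_of_le_of_finrank_le hSN (by omega)
  rw [hSeqN]
  exact hUN

end

end Polynomial

noncomputable section
open Polynomial MvPolynomial Submodule

variable {K : Type*} [Field K] [CharZero K]

lemma fin2_degree (m : Fin 2 →₀ ℕ) : m.degree = m 0 + m 1 := by
  rw [Finsupp.degree_apply, Finset.sum_subset (Finset.subset_univ m.support)
    (fun i _ hi => Finsupp.notMem_support_iff.mp hi), Fin.sum_univ_two]

lemma homog_eval_smul {σ : Type*} [Fintype σ] {f : MvPolynomial σ K} {n : ℕ}
    (hf : f.IsHomogeneous n) (c : K) (x : σ → K) :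
    MvPolynomial.eval (c • x) f = c ^ n * MvPolynomial.eval x f := by
  rw [eval_eq', eval_eq', Finset.mul_sum]
  refine Finset.sum_congr rfl fun m hm => ?_
  have hdeg : m.degree = n := by
    rw [Finsupp.degree_eq_weight_one]
    exact hf (mem_support_iff.mp hm)
  have : ∏ i, (c • x) i ^ m i = c ^ n * ∏ i, x i ^ m i := by
    have : ∀ i, (c • x) i ^ m i = c ^ m i * x i ^ m i := by
      intro i; rw [Pi.smul_apply, smul_eq_mul, mul_pow]
    rw [Finset.prod_congr rfl fun i _ => this i, Finset.prod_mul_distrib, Finset.prod_pow_eq_pow_sum]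
    congr 2
    rw [← hdeg, Finsupp.degree_apply, Finset.sum_subset (Finset.subset_univ m.support)
      (fun i _ hi => Finsupp.notMem_support_iff.mp hi)]
  rw [this]
  ring

/-- The dehomogenization map `f(x,y) ↦ f(X,1)`. -/
def Eh : MvPolynomial (Fin 2) K →ₐ[K] K[X] :=
  MvPolynomial.aeval ![Polynomial.X, 1]

lemma Eh_injOn_homog {d : ℕ} {f : MvPolynomial (Fin 2) K}
    (hf : f.IsHomogeneous d) (h : Eh f = 0) : f = 0 := by
  have key : ∀ u : K, MvPolynomial.eval ![u, 1] f = 0 := by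
    intro u
    have hcomp : (Polynomial.aeval u).comp (MvPolynomial.aeval ![Polynomial.X, (1 : K[X])])
        = MvPolynomial.aeval (![u, 1] : Fin 2 → K) := by
      apply MvPolynomial.algHom_ext
      intro i
      fin_cases i <;> simp
    have h1 : (MvPolynomial.aeval (![u, 1] : Fin 2 → K)) f = 0 := by
      rw [← hcomp]
      simp only [AlgHom.comp_apply]
      rw [show (MvPolynomial.aeval ![Polynomial.X, (1:K[X])]) f = Eh f from rfl, h, map_zero]
    have h2 : (MvPolynomial.aeval (![u, 1] : Fin 2 → K)) f
        = MvPolynomial.eval ![u, 1] f := rfl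
    rw [← h2, h1]
  have hall : ∀ x : Fin 2 → K, MvPolynomial.eval x (MvPolynomial.X 1 * f) = 0 := by
    intro x
    rw [map_mul, MvPolynomial.eval_X]
    rcases eq_or_ne (x 1) 0 with h0 | h0
    · rw [h0, zero_mul]
    · have hx : x = (x 1) • ![x 0 / x 1, 1] := by
        funext i
        fin_cases i
        · simp [mul_div_cancel₀ _ h0]
        · simp
      rw [hx, homog_eval_smul hf, key, mul_zero, mul_zero]
  have hX1f : MvPolynomial.X 1 * f = 0 := by
    exact ((MvPolynomial.isHomogeneous_X K (1 : Fin 2)).mul hf).eq_zero_of_forall_eval_eq_zero hall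
  rcases mul_eq_zero.mp hX1f with h1 | h1
  · exact absurd h1 (MvPolynomial.X_ne_zero 1)
  · exact h1

lemma Eh_C_mul_X_add (a b : K) :
    Eh (MvPolynomial.C a * MvPolynomial.X 0 + MvPolynomial.C b * MvPolynomial.X 1)
      = Polynomial.C a * Polynomial.X + Polynomial.C b := by
  simp [Eh, Matrix.cons_val_zero, Matrix.cons_val_one]

lemma isLinForm_abc (a b : K) (hab : a ≠ 0 ∨ b ≠ 0) :
    (MvPolynomial.C a * MvPolynomial.X 0 + MvPolynomial.C b * MvPolynomial.X 1 :
      MvPolynomial (Fin 2) K) ≠ 0 ∧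
    (MvPolynomial.C a * MvPolynomial.X 0 + MvPolynomial.C b * MvPolynomial.X 1 :
      MvPolynomial (Fin 2) K).IsHomogeneous 1 := by
  classical
  constructor
  · intro h0
    have h1 := congrArg (MvPolynomial.coeff (Finsupp.single (0 : Fin 2) 1)) h0
    have h2 := congrArg (MvPolynomial.coeff (Finsupp.single (1 : Fin 2) 1)) h0
    have hne : (Finsupp.single (0 : Fin 2) 1) ≠ (Finsupp.single (1 : Fin 2) 1) := by
      intro h
      have := DFunLike.congr_fun h (0 : Fin 2)
      simp [Finsupp.single_apply] at this
    simp only [MvPolynomial.coeff_add, MvPolynomial.coeff_C_mul, MvPolynomial.coeff_X',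
      MvPolynomial.coeff_zero] at h1 h2
    simp only [if_pos, if_neg hne, if_neg hne.symm, if_true, mul_one, mul_zero,
      add_zero, zero_add] at h1 h2
    rcases hab with ha | hb
    · exact ha h1
    · exact hb h2
  · exact ((isHomogeneous_C_mul_X a (0:Fin 2)).add (isHomogeneous_C_mul_X b (1:Fin 2)))

end
noncomputable section
open Polynomial MvPolynomial Submodule

variable {K : Type*} [Field K] [CharZero K]

lemma coeff_abc0 (a b : K) :
    MvPolynomial.coeff (Finsupp.single (0 : Fin 2) 1)
      (MvPolynomial.C a * MvPolynomial.X 0 + MvPolynomial.C b * MvPolynomial.X 1) = a := by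
  classical
  have hne : (Finsupp.single (1 : Fin 2) 1) ≠ (Finsupp.single (0 : Fin 2) 1) := by
    intro h
    have := DFunLike.congr_fun h (0 : Fin 2)
    simp [Finsupp.single_apply] at this
  simp [MvPolynomial.coeff_add, MvPolynomial.coeff_C_mul, MvPolynomial.coeff_X', hne]

lemma coeff_abc1 (a b : K) :
    MvPolynomial.coeff (Finsupp.single (1 : Fin 2) 1)
      (MvPolynomial.C a * MvPolynomial.X 0 + MvPolynomial.C b * MvPolynomial.X 1) = b := by
  classical
  have hne : (Finsupp.single (0 : Fin 2) 1) ≠ (Finsupp.single (1 : Fin 2) 1) := by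
    intro h
    have := DFunLike.congr_fun h (0 : Fin 2)
    simp [Finsupp.single_apply] at this
  simp [MvPolynomial.coeff_add, MvPolynomial.coeff_C_mul, MvPolynomial.coeff_X', hne]

lemma degree_Eh_le {d : ℕ} {g : MvPolynomial (Fin 2) K}
    (hg : g.IsHomogeneous d) : Eh g ∈ degreeLT K (d+1) := by
  rw [mem_degreeLT]
  have hrepr : Eh g = ∑ m ∈ g.support,
      Polynomial.C (MvPolynomial.coeff m g) *
        (Polynomial.X ^ (m 0) * (1:K[X]) ^ (m 1)) := by
    rw [Eh, MvPolynomial.aeval_def, MvPolynomial.eval₂_eq']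
    refine Finset.sum_congr rfl fun m _ => ?_
    rw [Fin.prod_univ_two]
    simp [algebraMap_eq]
  rw [hrepr]
  refine lt_of_le_of_lt (Polynomial.degree_sum_le _ _) ?_
  rw [Finset.sup_lt_iff (by exact_mod_cast WithBot.bot_lt_coe (d+1))]
  intro m hm
  have hm0 : m 0 ≤ d := by
    have := hg (MvPolynomial.mem_support_iff.mp hm)
    rw [show (Finsupp.weight 1 : (Fin 2 →₀ ℕ) →+ ℕ) = Finsupp.weight (fun _ => 1) from rfl,
      ← Finsupp.degree_eq_weight_one, fin2_degree] at this
    omega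
  rw [one_pow, mul_one]
  refine lt_of_le_of_lt (degree_C_mul_X_pow_le _ _) ?_
  exact_mod_cast Nat.lt_succ_of_le hm0

end

/-- Proposition 3.1 of the paper applied to the rational normal curve,
`m = 1`, `n = d`: if `V ⊆ W_d` is a linear subspace containing no `d`-th power of a linear
form (so `ℙ(V)` is disjoint from the rational normal curve), then `V` is contained in the span
of `d` pairwise non-proportional `d`-th powers of linear forms, i.e. `R_X(V) ≤ n + 1 − m`. -/
theorem subspace_le_span_of_d_powers
    {K : Type*} [Field K] [IsAlgClosed K] [CharZero K] (d : ℕ) (hd : 2 ≤ d)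
    (V : Submodule K (MvPolynomial (Fin 2) K))
    (hVW : V ≤ homogeneousSubmodule (Fin 2) K d)
    (hVX : ∀ l : MvPolynomial (Fin 2) K, IsLinForm l → l ^ d ∉ V) :
    ∃ l : Fin d → MvPolynomial (Fin 2) K, (∀ i, IsLinForm (l i)) ∧
      (∀ i j, i ≠ j → ∀ c : K, l i ≠ c • l j) ∧
      V ≤ span K (Set.range fun i => l i ^ d) := by
  classical
  set U : Submodule K (Polynomial K) := Submodule.map (Eh (K := K)).toLinearMap V with hUdef
  have hUlt : U ≤ Polynomial.degreeLT K (d+1) := by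
    rintro _ ⟨g, hg, rfl⟩
    exact degree_Eh_le (hVW hg)
  have habU : ∀ a b : K, (a ≠ 0 ∨ b ≠ 0) →
      (Polynomial.C a * Polynomial.X + Polynomial.C b)^d ∉ U := by
    intro a b hab habs
    obtain ⟨g, hg, hEg'⟩ := habs
    have hEg : Eh g = (Polynomial.C a * Polynomial.X + Polynomial.C b) ^ d := hEg'
    set l : MvPolynomial (Fin 2) K := MvPolynomial.C a * MvPolynomial.X 0 +
      MvPolynomial.C b * MvPolynomial.X 1 with hldef
    have hlin := isLinForm_abc a b hab
    have hEl : Eh (l^d) = (Polynomial.C a * Polynomial.X + Polynomial.C b)^d := by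
      rw [map_pow, Eh_C_mul_X_add]
    have hhoml : (l^d).IsHomogeneous d := by
      have := hlin.2.pow d
      rwa [one_mul] at this
    have hgeq : g = l^d := by
      have hhomg : g.IsHomogeneous d := hVW hg
      have := Eh_injOn_homog (hhomg.sub hhoml)
        (by rw [map_sub, hEg, hEl, sub_self])
      exact sub_eq_zero.mp this
    exact hVX l ⟨hlin.1, hlin.2⟩ (hgeq ▸ hg)
  have h1U : (1 : Polynomial K) ∉ U := by
    have := habU 0 1 (Or.inr one_ne_zero)
    simpa using this
  have hrootU : ∀ r : K, (Polynomial.X - Polynomial.C r)^d ∉ U := by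
    intro r
    have := habU 1 (-r) (Or.inl one_ne_zero)
    simpa [sub_eq_add_neg] using this
  obtain ⟨s, hsinj, hUspan⟩ := Polynomial.poly_core d (le_trans one_le_two hd) U hUlt h1U hrootU
  set l : Fin d → MvPolynomial (Fin 2) K := fun i =>
    MvPolynomial.C 1 * MvPolynomial.X 0 + MvPolynomial.C (-(s i)) * MvPolynomial.X 1 with hldef
  have hlin : ∀ i, IsLinForm (l i) := fun i =>
    ⟨(isLinForm_abc 1 (-(s i)) (Or.inl one_ne_zero)).1,
     (isLinForm_abc 1 (-(s i)) (Or.inl one_ne_zero)).2⟩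
  have hEl : ∀ i, Eh (l i ^ d) = (Polynomial.X - Polynomial.C (s i))^d := by
    intro i
    rw [map_pow, Eh_C_mul_X_add, Polynomial.C_1, one_mul, map_neg, ← sub_eq_add_neg]
  have hhoml : ∀ i, (l i ^ d).IsHomogeneous d := by
    intro i
    have := (hlin i).2.pow d
    rwa [one_mul] at this
  refine ⟨l, hlin, ?_, ?_⟩
  · intro i j hij c habs
    have h0 := congrArg (MvPolynomial.coeff (Finsupp.single (0 : Fin 2) 1)) habs
    have h1 := congrArg (MvPolynomial.coeff (Finsupp.single (1 : Fin 2) 1)) habs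
    rw [MvPolynomial.coeff_smul] at h0 h1
    rw [hldef] at h0 h1
    simp only [coeff_abc0, coeff_abc1, smul_eq_mul] at h0 h1
    rw [mul_one] at h0
    rw [← h0, one_mul] at h1
    exact hij (hsinj (neg_injective h1))
  · intro f hf
    have hEf : Eh f ∈ U := ⟨f, hf, rfl⟩
    have hmem := hUspan hEf
    have hfun : (fun i => (Polynomial.X - Polynomial.C (s i))^d)
        = ((Eh (K := K)).toLinearMap ∘ fun i => l i ^ d) := by
      funext i
      exact (hEl i).symm
    have hspan : span K (Set.range fun i => (Polynomial.X - Polynomial.C (s i))^d)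
        = Submodule.map (Eh (K := K)).toLinearMap (span K (Set.range fun i => l i ^ d)) := by
      rw [Submodule.map_span, ← Set.range_comp, ← hfun]
    rw [hspan] at hmem
    obtain ⟨g, hg, hEgf'⟩ := hmem
    have hEgf : Eh g = Eh f := hEgf'
    have hgH : g.IsHomogeneous d := by
      have hSd : span K (Set.range fun i => l i ^ d) ≤ homogeneousSubmodule (Fin 2) K d := by
        rw [span_le]
        rintro _ ⟨i, rfl⟩
        exact (mem_homogeneousSubmodule _ _).mpr (hhoml i)
      exact (mem_homogeneousSubmodule _ _).mp (hSd hg)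
    have : f = g := by
      have := Eh_injOn_homog ((hVW hf).sub hgH)
        (by rw [map_sub, hEgf, sub_self])
      exact sub_eq_zero.mp this
    exact this ▸ hg
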